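/- arXiv:2001.01856 — 2 statements merged into one kernel-verified Lean document; each statement's English description precedes it below -/
import Mathlib

section
/- Let Ω ⊂ ℂⁿ be a bounded domain with Bergman kernel K and finite volume v(Ω). If K(z₀, z₀) = 1/v(Ω) for some z₀ ∈ Ω, then every function φ ∈ A²(Ω) which is orthogonal to the constant function 1 vanishes at z₀; consequently K(z, z₀) = 1/v(Ω) for all z ∈ Ω. -/
open MeasureTheory Metric Complex Filter

/-- The Bergman space of square-integrable holomorphic functions on `Ω ⊆ ℂⁿ`. -/
def BergmanSpace {n : ℕ} (Ω : Set (Fin n → ℂ)) : Set ((Fin n → ℂ) → ℂ) :=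
  {f | DifferentiableOn ℂ f Ω ∧ MemLp f 2 (volume.restrict Ω)}

/-- `K` is the Bergman (reproducing) kernel of `Ω ⊆ ℂⁿ`. -/
def IsBergmanKernel {n : ℕ} (Ω : Set (Fin n → ℂ)) (K : (Fin n → ℂ) → (Fin n → ℂ) → ℂ) : Prop :=
  (∀ w ∈ Ω, (fun z => K z w) ∈ BergmanSpace Ω) ∧
  (∀ z ∈ Ω, ∀ w ∈ Ω, K z w = (starRingEnd ℂ) (K w z)) ∧
  (∀ f ∈ BergmanSpace Ω, ∀ z ∈ Ω, f z = ∫ w in Ω, f w * K z w)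

lemma memℒp_two_integrable_normSq {α : Type*} [MeasurableSpace α] {μ : Measure α}
    {g : α → ℂ} (hg : MemLp g 2 μ) :
    Integrable (fun x => (Complex.normSq (g x) : ℝ)) μ := by
  have h := hg.integrable_norm_rpow two_ne_zero ENNReal.ofNat_ne_top
  refine h.congr (Eventually.of_forall fun x => ?_)
  show ‖g x‖ ^ (2:ENNReal).toReal = (Complex.normSq (g x) : ℝ)
  rw [show ((2:ENNReal).toReal) = ((2:ℕ):ℝ) by norm_num, Real.rpow_natCast]
  simp [Complex.sq_norm]

/-- If the Bergman kernel of a bounded domain `Ω ⊆ ℂⁿ` attains the minimal value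
`1/v(Ω)` on the diagonal at `z₀`, then every `φ ∈ A²(Ω)` orthogonal to the constant
function `1` vanishes at `z₀`, and `K(z, z₀) = 1/v(Ω)` for all `z ∈ Ω`. -/
theorem minimal_point_of_bergman_kernel {n : ℕ} (Ω : Set (Fin n → ℂ))
    (hΩo : IsOpen Ω) (hΩc : IsConnected Ω) (hΩb : Bornology.IsBounded Ω)
    (K : (Fin n → ℂ) → (Fin n → ℂ) → ℂ) (hK : IsBergmanKernel Ω K)
    (z₀ : Fin n → ℂ) (hz₀ : z₀ ∈ Ω)
    (hmin : K z₀ z₀ = ((1 / (volume Ω).toReal : ℝ) : ℂ)) :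
    (∀ φ ∈ BergmanSpace Ω, (∫ w in Ω, φ w) = 0 → φ z₀ = 0) ∧
    (∀ z ∈ Ω, K z z₀ = ((1 / (volume Ω).toReal : ℝ) : ℂ)) := by
  obtain ⟨hK1, hK2, hK3⟩ := hK
  have hΩm : MeasurableSet Ω := hΩo.measurableSet
  have hvlt : volume Ω < ⊤ := hΩb.measure_lt_top
  have hvne : volume Ω ≠ 0 := (hΩo.measure_pos volume hΩc.nonempty).ne'
  have hvpos : 0 < (volume Ω).toReal := ENNReal.toReal_pos hvne hvlt.ne
  set c : ℝ := 1 / (volume Ω).toReal with hc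
  have hcv : ((volume Ω).toReal : ℂ) * (c : ℂ) = 1 := by
    rw [hc]; push_cast
    rw [mul_one_div, div_self]
    exact_mod_cast hvpos.ne'
  haveI : IsFiniteMeasure (volume.restrict Ω) :=
    ⟨by simpa [Measure.restrict_apply_univ] using hvlt⟩
  have hone : (fun _ : Fin n → ℂ => (1:ℂ)) ∈ BergmanSpace Ω :=
    ⟨differentiableOn_const 1, memLp_const 1⟩
  have h1 : ∀ z ∈ Ω, (1:ℂ) = ∫ w in Ω, K z w := by
    intro z hz
    simpa using hK3 _ hone z hz
  set f : (Fin n → ℂ) → ℂ := fun w => K w z₀ with hf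
  have hfB : f ∈ BergmanSpace Ω := hK1 z₀ hz₀
  have hf2 : MemLp f 2 (volume.restrict Ω) := hfB.2
  have hfInt : Integrable f (volume.restrict Ω) := hf2.integrable one_le_two
  have hnsInt : Integrable (fun w => (Complex.normSq (f w) : ℝ)) (volume.restrict Ω) :=
    memℒp_two_integrable_normSq hf2
  have hconjInt : Integrable (fun w => (starRingEnd ℂ) (f w)) (volume.restrict Ω) := by
    refine hfInt.mono ?_ (Eventually.of_forall fun w => by simp)
    exact Complex.continuous_conj.comp_aestronglyMeasurable hfInt.aestronglyMeasurable
  -- ∫ f = 1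
  have hI1 : ∫ w in Ω, f w = 1 := by
    have h := h1 z₀ hz₀
    have h2 : ∫ w in Ω, K z₀ w = ∫ w in Ω, (starRingEnd ℂ) (f w) :=
      setIntegral_congr_fun hΩm fun w hw => hK2 z₀ hz₀ w hw
    rw [h2, integral_conj] at h
    have h3 := congrArg (starRingEnd ℂ) h
    simpa using h3.symm
  -- ∫ |f|² = c
  have hA : ∫ w in Ω, f w * (starRingEnd ℂ) (f w) = ((c:ℝ):ℂ) := by
    have h := hK3 f hfB z₀ hz₀
    have h2 : ∫ w in Ω, f w * K z₀ w = ∫ w in Ω, f w * (starRingEnd ℂ) (f w) :=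
      setIntegral_congr_fun hΩm fun w hw => by rw [hK2 z₀ hz₀ w hw]
    rw [h2] at h
    rw [← h]; exact hmin
  have hI2 : ∫ w in Ω, ((Complex.normSq (f w) : ℝ) : ℂ) = ((c:ℝ):ℂ) := by
    rw [← hA]
    exact integral_congr_ae (Eventually.of_forall fun w => (Complex.mul_conj (f w)).symm)
  -- key : f = c a.e.
  have key : ∀ᵐ w ∂(volume.restrict Ω), f w = ((c:ℝ):ℂ) := by
    have hIff : Integrable (fun w => f w * (starRingEnd ℂ) (f w)) (volume.restrict Ω) :=
      hnsInt.ofReal.congr (Eventually.of_forall fun w => (Complex.mul_conj (f w)).symm)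
    have hInt2 : Integrable (fun w => ((c:ℝ):ℂ) * (starRingEnd ℂ) (f w)) (volume.restrict Ω) :=
      hconjInt.const_mul _
    have hInt3 : Integrable (fun w => ((c:ℝ):ℂ) * f w) (volume.restrict Ω) :=
      hfInt.const_mul _
    have hIg : ∫ w in Ω, (f w - ((c:ℝ):ℂ)) * (starRingEnd ℂ) (f w - ((c:ℝ):ℂ)) = 0 := by
      have hmc : (fun w => (f w - ((c:ℝ):ℂ)) * (starRingEnd ℂ) (f w - ((c:ℝ):ℂ)))
          = fun w => f w * (starRingEnd ℂ) (f w) - ((c:ℝ):ℂ) * (starRingEnd ℂ) (f w)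
              - ((c:ℝ):ℂ) * f w + ((c:ℝ):ℂ)^2 := by
        funext w
        simp only [map_sub, Complex.conj_ofReal]
        ring
      have i2 : Integrable (fun w => f w * (starRingEnd ℂ) (f w)
          - ((c:ℝ):ℂ) * (starRingEnd ℂ) (f w)) (volume.restrict Ω) := by
        exact hIff.sub hInt2
      have i3 : Integrable (fun w => f w * (starRingEnd ℂ) (f w)
          - ((c:ℝ):ℂ) * (starRingEnd ℂ) (f w) - ((c:ℝ):ℂ) * f w) (volume.restrict Ω) := by
        exact i2.sub hInt3
      rw [hmc, integral_add i3 (integrable_const _),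
        integral_sub i2 hInt3, integral_sub hIff hInt2,
        hA, integral_const_mul, integral_const_mul, integral_conj, hI1, setIntegral_const]
      simp only [map_one, mul_one, Complex.real_smul, measureReal_def]
      linear_combination ((c:ℝ):ℂ) * hcv
    have hg2 : ∫ w in Ω, (Complex.normSq (f w - ((c:ℝ):ℂ)) : ℝ) = 0 := by
      have h0 : ∫ w in Ω, ((Complex.normSq (f w - ((c:ℝ):ℂ)) : ℝ) : ℂ) = 0 := by
        rw [← hIg]
        exact integral_congr_ae (Eventually.of_forall fun w => (Complex.mul_conj _).symm)
      apply Complex.ofReal_injective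
      rw [Complex.ofReal_zero, ← h0]
      exact (integral_ofReal (𝕜 := ℂ)).symm
    have hgInt : Integrable (fun w => (Complex.normSq (f w - ((c:ℝ):ℂ)) : ℝ))
        (volume.restrict Ω) :=
      memℒp_two_integrable_normSq (hf2.sub (memLp_const _))
    have hae0 : (fun w => (Complex.normSq (f w - ((c:ℝ):ℂ)) : ℝ)) =ᵐ[volume.restrict Ω] 0 :=
      (integral_eq_zero_iff_of_nonneg (fun w => Complex.normSq_nonneg _) hgInt).mp hg2
    filter_upwards [hae0] with w hw
    have : f w - ((c:ℝ):ℂ) = 0 := Complex.normSq_eq_zero.mp hw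
    exact sub_eq_zero.mp this
  constructor
  · intro φ hφ hint
    have h := hK3 φ hφ z₀ hz₀
    rw [h]
    have h2 : ∫ w in Ω, φ w * K z₀ w = ∫ w in Ω, φ w * ((c:ℝ):ℂ) := by
      refine integral_congr_ae ?_
      filter_upwards [key, ae_restrict_mem hΩm] with w hw hwΩ
      rw [hK2 z₀ hz₀ w hwΩ]
      show φ w * (starRingEnd ℂ) (f w) = _
      rw [hw, Complex.conj_ofReal]
    rw [h2, integral_mul_const, hint, zero_mul]
  · intro z hz
    have h := hK3 f hfB z hz
    have h2 : ∫ w in Ω, f w * K z w = ∫ w in Ω, ((c:ℝ):ℂ) * K z w := by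
      refine integral_congr_ae ?_
      filter_upwards [key] with w hw
      rw [hw]
    show f z = _
    rw [h, h2, integral_const_mul, ← h1 z hz, mul_one]
end

section
/- Let X be a nonempty set and K: X × X → ℂ be a reproducing kernel for a Hilbert space of functions containing a nonzero constant function c, and suppose K(z₀, z₀) equals |c|²/⟨c,c⟩ (the minimal possible value). Then for every f in the Hilbert space orthogonal to c, f(z₀) = 0. -/
/-- Abstract RKHS statement: let `H` be a Hilbert space of functions on `X` (realized via
an injective linear evaluation map `ev`) with reproducing kernel `K`, represented by
`k : X → H` with `⟪k w, f⟫ = f(w)` (Mathlib inner products are conjugate-linear in the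
first slot). If `H` contains a nonzero constant function `c ≡ C₀` and
`K(z₀, z₀) = |C₀|²/⟨c,c⟩`, then every `f ∈ H` orthogonal to `c` vanishes at `z₀`. -/
theorem rkhs_orthogonal_to_constant_vanishes {X : Type*} {H : Type*}
    [NormedAddCommGroup H] [InnerProductSpace ℂ H] [CompleteSpace H]
    (ev : H →ₗ[ℂ] (X → ℂ)) (hinj : Function.Injective ev)
    (K : X → X → ℂ) (k : X → H)
    (hk : ∀ w : X, ev (k w) = fun z => K z w)
    (hrep : ∀ (f : H) (w : X), (inner ℂ (k w) f : ℂ) = ev f w)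
    (c : H) (C₀ : ℂ) (hC₀ : C₀ ≠ 0) (hc : ev c = fun _ => C₀)
    (z₀ : X) (hmin : K z₀ z₀ = ((((‖C₀‖ : ℝ)) : ℂ)) ^ 2 / (inner ℂ c c : ℂ)) :
    ∀ f : H, (inner ℂ c f : ℂ) = 0 → ev f z₀ = 0 := by
  intro f hf
  have hcne : c ≠ 0 := by
    intro h
    apply hC₀
    have := congrFun hc z₀
    rw [h] at this
    simpa using this.symm
  set t : ℂ := inner ℂ c c with ht
  have htne : t ≠ 0 := by
    simpa [ht, inner_self_eq_zero] using hcne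
  have htconj : (starRingEnd ℂ) t = t := by
    rw [ht, inner_conj_symm]
  have hkz : (inner ℂ (k z₀) (k z₀) : ℂ) = K z₀ z₀ := by
    rw [hrep, hk]
  have hkc : (inner ℂ (k z₀) c : ℂ) = C₀ := by
    rw [hrep, hc]
  have hck : (inner ℂ c (k z₀) : ℂ) = (starRingEnd ℂ) C₀ := by
    rw [← inner_conj_symm, hkc]
  have habs : ((((‖C₀‖ : ℝ)) : ℂ)) ^ 2 = C₀ * (starRingEnd ℂ) C₀ := by
    rw [Complex.mul_conj]; norm_cast; exact Complex.sq_norm C₀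
  set α : ℂ := (starRingEnd ℂ) C₀ / t with hα
  have hr : k z₀ - α • c = 0 := by
    rw [← inner_self_eq_zero (𝕜 := ℂ)]
    rw [inner_sub_left, inner_sub_right, inner_sub_right, inner_smul_left,
      inner_smul_right, inner_smul_left, inner_smul_right, hkz, hkc, hck, ← ht, hmin, hα,
      map_div₀, htconj, habs]
    simp only [RingHomCompTriple.comp_apply, RingHom.id_apply]
    field_simp
    ring
  have hkeq : k z₀ = α • c := by
    rwa [sub_eq_zero] at hr
  have : (inner ℂ (k z₀) f : ℂ) = 0 := by
    rw [hkeq, inner_smul_left, hf, mul_zero]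
  rw [← hrep, this]
end
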